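/- arXiv:2012.11039 — 2 statements merged into one kernel-verified Lean document; each statement's English description precedes it below -/
import Mathlib

section
/- Let 𝒱 = {v₁, …, v_N} ⊂ ℝ^d be a finite set. If the supremum of the Lebesgue volume of ⋂_{v∈𝒱} {p : ⟨p,v⟩ ≤ c_v} over all (c_v) ∈ ℝ^𝒱 with ∑_v c_v = 1 is finite and attained, then Span(𝒱) = ℝ^d and ∑_{v∈𝒱} v = 0. -/
open MeasureTheory
set_option maxHeartbeats 1000000
open scoped RealInnerProductSpace Pointwise

/-- The polyhedron `⋂_{v ∈ 𝒱} {p : ⟨p,v⟩ ≤ c v}`. -/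
def Rset {d : ℕ} (𝒱 : Finset (EuclideanSpace ℝ (Fin d)))
    (c : EuclideanSpace ℝ (Fin d) → ℝ) : Set (EuclideanSpace ℝ (Fin d)) :=
  {p | ∀ v ∈ 𝒱, ⟪p, v⟫ ≤ c v}

/-- Lemma 3.1(1), necessity: if the supremum of the volume over the constraint
`∑ c_v = 1` is finite and attained, then `𝒱` spans `ℝ^d` and `∑_{v∈𝒱} v = 0`. -/
theorem stmt3 {d : ℕ} (𝒱 : Finset (EuclideanSpace ℝ (Fin d)))
    (c : EuclideanSpace ℝ (Fin d) → ℝ) (hc : ∑ v ∈ 𝒱, c v = 1)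
    (hfin : volume (Rset 𝒱 c) ≠ ⊤)
    (hmax : ∀ c' : EuclideanSpace ℝ (Fin d) → ℝ, ∑ v ∈ 𝒱, c' v = 1 →
      volume (Rset 𝒱 c') ≤ volume (Rset 𝒱 c)) :
    Submodule.span ℝ (𝒱 : Set (EuclideanSpace ℝ (Fin d))) = ⊤ ∧
      ∑ v ∈ 𝒱, v = 0 := by
  classical
  -- the case d = 0
  rcases Nat.eq_zero_or_pos d with hd0 | hdpos
  · subst hd0
    haveI : Subsingleton (EuclideanSpace ℝ (Fin 0)) := ⟨fun a b => PiLp.ext fun i => Fin.elim0 i⟩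
    constructor
    · ext x
      simp only [Submodule.mem_top, iff_true]
      have : x = 0 := Subsingleton.elim _ _
      rw [this]; exact Submodule.zero_mem _
    · exact Subsingleton.elim _ _
  -- 𝒱 is nonempty
  have hne : 𝒱.Nonempty := by
    rcases 𝒱.eq_empty_or_nonempty with h | h
    · rw [h] at hc; simp at hc
    · exact h
  set N : ℝ := (𝒱.card : ℝ) with hN
  have hNpos : 0 < N := by
    have := Finset.card_pos.mpr hne
    positivity
  set S : ℝ := ∑ v ∈ 𝒱, ‖v‖ with hS
  have hSnn : 0 ≤ S := Finset.sum_nonneg fun v _ => norm_nonneg v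
  set ε : ℝ := (N * (1 + S))⁻¹ with hε
  have hεpos : 0 < ε := by positivity
  have hεv : ∀ v ∈ 𝒱, ε * ‖v‖ ≤ N⁻¹ := by
    intro v hv
    have h1 : ‖v‖ ≤ 1 + S :=
      le_trans (Finset.single_le_sum (fun w _ => norm_nonneg w) hv) (by linarith)
    have h2 := mul_le_mul_of_nonneg_left h1 hεpos.le
    calc ε * ‖v‖ ≤ ε * (1 + S) := h2
      _ = N⁻¹ := by
        rw [hε]; field_simp
  have hsumN : ∑ _v ∈ 𝒱, (N⁻¹ : ℝ) = 1 := by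
    rw [Finset.sum_const, nsmul_eq_mul, ← hN]
    field_simp
  have hball : ∀ q : EuclideanSpace ℝ (Fin d), (∀ v ∈ 𝒱, ⟪q, v⟫ = 0) →
      Metric.closedBall q ε ⊆ Rset 𝒱 (fun _ => N⁻¹) := by
    intro q hq p hp v hv
    have h1 : ⟪p, v⟫ = ⟪p - q, v⟫ := by
      rw [inner_sub_left, hq v hv]; ring
    have hpq : ‖p - q‖ ≤ ε := by
      rw [Metric.mem_closedBall, dist_eq_norm] at hp; exact hp
    calc ⟪p, v⟫ = ⟪p - q, v⟫ := h1
      _ ≤ ‖p - q‖ * ‖v‖ := real_inner_le_norm _ _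
      _ ≤ ε * ‖v‖ := mul_le_mul_of_nonneg_right hpq (norm_nonneg _)
      _ ≤ N⁻¹ := hεv v hv
  have hδpos : 0 < volume (Metric.closedBall (0 : EuclideanSpace ℝ (Fin d)) ε) :=
    Metric.measure_closedBall_pos _ _ hεpos
  have hq0 : ∀ v ∈ 𝒱, ⟪(0 : EuclideanSpace ℝ (Fin d)), v⟫ = 0 := fun v _ => inner_zero_left v
  have hpos : 0 < volume (Rset 𝒱 c) :=
    lt_of_lt_of_le hδpos
      (le_trans (measure_mono (hball 0 hq0)) (hmax _ hsumN))
  -- Part 1: 𝒱 spans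
  have hspan : Submodule.span ℝ (𝒱 : Set (EuclideanSpace ℝ (Fin d))) = ⊤ := by
    by_contra hspan
    have horth : (Submodule.span ℝ (𝒱 : Set (EuclideanSpace ℝ (Fin d))))ᗮ ≠ ⊥ := by
      simp only [ne_eq, Submodule.orthogonal_eq_bot_iff]
      exact hspan
    obtain ⟨u, hu_mem, hu0⟩ := Submodule.exists_mem_ne_zero_of_ne_bot horth
    set u' : EuclideanSpace ℝ (Fin d) := ‖u‖⁻¹ • u with hu'def
    have hu'norm : ‖u'‖ = 1 := norm_smul_inv_norm hu0
    have hu'orth : ∀ v ∈ 𝒱, ⟪u', v⟫ = 0 := by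
      intro v hv
      have hv' : v ∈ Submodule.span ℝ (𝒱 : Set (EuclideanSpace ℝ (Fin d))) :=
        Submodule.subset_span hv
      have h0 := (Submodule.mem_orthogonal _ u).mp hu_mem v hv'
      rw [hu'def, inner_smul_left]
      rw [real_inner_comm] at h0
      simp [h0]
    have hforth : ∀ k : ℕ, ∀ v ∈ 𝒱, ⟪(3 * ε * k) • u', v⟫ = 0 := by
      intro k v hv
      simp [inner_smul_left, hu'orth v hv]
    have hdisj : Pairwise (Function.onFun Disjoint
        fun k : ℕ => Metric.closedBall ((3 * ε * (k : ℝ)) • u') ε) := by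
      intro k j hkj
      apply Metric.closedBall_disjoint_closedBall
      have hdist : dist ((3 * ε * (k : ℝ)) • u') ((3 * ε * (j : ℝ)) • u')
          = 3 * ε * |(k : ℝ) - j| := by
        rw [dist_eq_norm, ← sub_smul, norm_smul, hu'norm, mul_one, Real.norm_eq_abs]
        rw [show (3 * ε * k - 3 * ε * j : ℝ) = 3 * ε * ((k : ℝ) - j) by ring]
        rw [abs_mul, abs_of_pos (mul_pos (by norm_num : (0:ℝ) < 3) hεpos)]
      have hz : (1 : ℤ) ≤ |(k : ℤ) - (j : ℤ)| := Int.one_le_abs (by omega)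
      have h1 : (1 : ℝ) ≤ |(k : ℝ) - j| := by exact_mod_cast hz
      rw [hdist]
      nlinarith
    have hsub : ∀ k : ℕ, Metric.closedBall ((3 * ε * (k : ℝ)) • u') ε ⊆ Rset 𝒱 (fun _ => N⁻¹) :=
      fun k => hball _ (hforth k)
    have htop : volume (⋃ k : ℕ, Metric.closedBall ((3 * ε * (k : ℝ)) • u') ε) = ⊤ := by
      rw [measure_iUnion hdisj fun k => measurableSet_closedBall]
      have heach : ∀ k : ℕ, volume (Metric.closedBall ((3 * ε * (k : ℝ)) • u') ε)
          = volume (Metric.closedBall (0 : EuclideanSpace ℝ (Fin d)) ε) :=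
        fun k => Measure.addHaar_closedBall_center _ _ _
      rw [tsum_congr heach]
      exact ENNReal.tsum_const_eq_top_of_ne_zero hδpos.ne'
    have hle : (⊤ : ENNReal) ≤ volume (Rset 𝒱 c) := by
      rw [← htop]
      exact le_trans (measure_mono (Set.iUnion_subset hsub)) (hmax _ hsumN)
    exact hfin (top_le_iff.mp hle)
  refine ⟨hspan, ?_⟩
  -- Part 2: ∑ v = 0
  by_contra hs0
  set s : EuclideanSpace ℝ (Fin d) := ∑ v ∈ 𝒱, v with hsdef
  set w : EuclideanSpace ℝ (Fin d) := (‖s‖ ^ 2)⁻¹ • s with hw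
  set c' : EuclideanSpace ℝ (Fin d) → ℝ := fun v => 2 * c v - ⟪w, v⟫ with hc'def
  have hc' : ∑ v ∈ 𝒱, c' v = 1 := by
    rw [hc'def]
    simp only [Finset.sum_sub_distrib, ← Finset.mul_sum, hc]
    have hws : ∑ v ∈ 𝒱, ⟪w, v⟫ = ⟪w, s⟫ := by
      rw [hsdef, inner_sum]
    rw [hws, hw, real_inner_smul_left, real_inner_self_eq_norm_sq]
    have hs2 : (0 : ℝ) < ‖s‖ ^ 2 := pow_pos (norm_pos_iff.mpr hs0) 2
    field_simp
    norm_num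
  have hset : Rset 𝒱 c' = (-w) +ᵥ ((2 : ℝ) • Rset 𝒱 c) := by
    ext p
    rw [Set.mem_vadd_set_iff_neg_vadd_mem,
      Set.mem_smul_set_iff_inv_smul_mem₀ (by norm_num : (2:ℝ) ≠ 0)]
    simp only [neg_neg, vadd_eq_add, Rset, Set.mem_setOf_eq, hc'def]
    constructor
    · intro h v hv
      have h2 := h v hv
      rw [inner_smul_left, inner_add_left]
      simp only [RCLike.inner_apply, conj_trivial] at *
      linarith
    · intro h v hv
      have h2 := h v hv
      rw [inner_smul_left, inner_add_left] at h2
      simp only [RCLike.inner_apply, conj_trivial] at *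
      linarith
  have hvol : volume (Rset 𝒱 c') = ENNReal.ofReal (2 ^ d) * volume (Rset 𝒱 c) := by
    rw [hset, measure_vadd, Measure.addHaar_smul, finrank_euclideanSpace_fin,
      abs_of_pos (by positivity)]
  have hle := hmax c' hc'
  rw [hvol] at hle
  have hgt : volume (Rset 𝒱 c) < ENNReal.ofReal (2 ^ d) * volume (Rset 𝒱 c) := by
    conv_lhs => rw [← one_mul (volume (Rset 𝒱 c))]
    rw [ENNReal.mul_lt_mul_iff_left hpos.ne' hfin]
    rw [← ENNReal.ofReal_one]
    rw [ENNReal.ofReal_lt_ofReal_iff (by positivity)]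
    exact one_lt_pow₀ (by norm_num) (by omega)
  exact absurd (lt_of_lt_of_le hgt hle) (lt_irrefl _)
end

section
/- Let 𝒱 ⊂ ℝ^d be finite with ∑_{v∈𝒱} v = b ≠ 0. Then for every competitor c with ∑_v c_v = 1 and vol(R_c) > 0 and every ε ∈ (0,1), there exists a translation w and coefficients c' with ∑_v c'_v = ε such that R_c + w = R_{c'}; consequently (1/ε)(R_c + w) is a competitor with volume ε^{-d} vol(R_c), and the supremum C_𝒱 is +∞. -/
open MeasureTheory
open scoped RealInnerProductSpace ENNReal Pointwise

/-- Lemma 3.1(1), sufficiency direction of non-existence: if `∑_{v∈𝒱} v = b ≠ 0`,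
then any positive-volume competitor can be translated to one with total
coefficient `ε`, whose rescaling by `1/ε` is a competitor of volume
`ε^{-d}` times bigger; consequently the supremum is `+∞` (as soon as some
competitor has positive volume). -/
theorem stmt5 {d : ℕ} (𝒱 : Finset (EuclideanSpace ℝ (Fin d)))
    (b : EuclideanSpace ℝ (Fin d)) (hb : ∑ v ∈ 𝒱, v = b) (hb0 : b ≠ 0) :
    (∀ c : EuclideanSpace ℝ (Fin d) → ℝ, ∑ v ∈ 𝒱, c v = 1 →
      0 < volume (Rset 𝒱 c) → ∀ ε : ℝ, 0 < ε → ε < 1 →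
        ∃ (w : EuclideanSpace ℝ (Fin d)) (c' : EuclideanSpace ℝ (Fin d) → ℝ),
          (∑ v ∈ 𝒱, c' v = ε) ∧ ((w + ·) '' Rset 𝒱 c = Rset 𝒱 c') ∧
          ∃ c'' : EuclideanSpace ℝ (Fin d) → ℝ, (∑ v ∈ 𝒱, c'' v = 1) ∧
            ((ε⁻¹ • ·) '' Rset 𝒱 c' = Rset 𝒱 c'') ∧
            volume (Rset 𝒱 c'') = (ENNReal.ofReal ε)⁻¹ ^ d * volume (Rset 𝒱 c)) ∧
    ((∃ c₀ : EuclideanSpace ℝ (Fin d) → ℝ, (∑ v ∈ 𝒱, c₀ v = 1) ∧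
        0 < volume (Rset 𝒱 c₀)) →
      (⨆ c ∈ {c : EuclideanSpace ℝ (Fin d) → ℝ | ∑ v ∈ 𝒱, c v = 1},
          volume (Rset 𝒱 c)) = ⊤) := by
  have hd : d ≠ 0 := by
    rintro rfl
    exact hb0 (Subsingleton.elim b 0)
  have hbb : (0:ℝ) < ⟪b, b⟫ := by
    have hb' : 0 < ‖b‖ := norm_pos_iff.mpr hb0
    rw [real_inner_self_eq_norm_sq]
    positivity
  have key : ∀ c : EuclideanSpace ℝ (Fin d) → ℝ, ∑ v ∈ 𝒱, c v = 1 →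
      0 < volume (Rset 𝒱 c) → ∀ ε : ℝ, 0 < ε → ε < 1 →
        ∃ (w : EuclideanSpace ℝ (Fin d)) (c' : EuclideanSpace ℝ (Fin d) → ℝ),
          (∑ v ∈ 𝒱, c' v = ε) ∧ ((w + ·) '' Rset 𝒱 c = Rset 𝒱 c') ∧
          ∃ c'' : EuclideanSpace ℝ (Fin d) → ℝ, (∑ v ∈ 𝒱, c'' v = 1) ∧
            ((ε⁻¹ • ·) '' Rset 𝒱 c' = Rset 𝒱 c'') ∧
            volume (Rset 𝒱 c'') = (ENNReal.ofReal ε)⁻¹ ^ d * volume (Rset 𝒱 c) := by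
    intro c hc hvol ε hε hε1
    set w : EuclideanSpace ℝ (Fin d) := ((ε - 1) / ⟪b, b⟫) • b with hw
    set c' : EuclideanSpace ℝ (Fin d) → ℝ := fun v => c v + ⟪w, v⟫ with hc'
    set c'' : EuclideanSpace ℝ (Fin d) → ℝ := fun v => ε⁻¹ * c' v with hc''
    have hsum' : ∑ v ∈ 𝒱, c' v = ε := by
      simp only [hc']
      rw [Finset.sum_add_distrib, hc, ← inner_sum, hb, hw, real_inner_smul_left,
        div_mul_cancel₀ _ hbb.ne']
      ring
    have himg1 : (w + ·) '' Rset 𝒱 c = Rset 𝒱 c' := by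
      ext p
      simp only [Set.mem_image, Rset, Set.mem_setOf_eq, hc']
      constructor
      · rintro ⟨q, hq, rfl⟩ v hv
        rw [inner_add_left]
        linarith [hq v hv]
      · intro hp
        refine ⟨p - w, fun v hv => ?_, by abel⟩
        rw [inner_sub_left]
        linarith [hp v hv]
    have himg2 : (ε⁻¹ • ·) '' Rset 𝒱 c' = Rset 𝒱 c'' := by
      ext p
      simp only [Set.mem_image, Rset, Set.mem_setOf_eq, hc'']
      constructor
      · rintro ⟨q, hq, rfl⟩ v hv
        rw [real_inner_smul_left]
        exact mul_le_mul_of_nonneg_left (hq v hv) (by positivity)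
      · intro hp
        refine ⟨ε • p, fun v hv => ?_, by rw [smul_smul, inv_mul_cancel₀ hε.ne', one_smul]⟩
        rw [real_inner_smul_left]
        calc ε * ⟪p, v⟫ ≤ ε * (ε⁻¹ * c' v) := mul_le_mul_of_nonneg_left (hp v hv) hε.le
          _ = c' v := by field_simp
    have hvol1 : volume (Rset 𝒱 c') = volume (Rset 𝒱 c) := by
      rw [← himg1]
      have : (w + ·) '' Rset 𝒱 c = w +ᵥ Rset 𝒱 c := rfl
      rw [this, measure_vadd]
    have hvol2 : volume (Rset 𝒱 c'') = (ENNReal.ofReal ε)⁻¹ ^ d * volume (Rset 𝒱 c) := by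
      rw [← himg2]
      have : (ε⁻¹ • ·) '' Rset 𝒱 c' = ε⁻¹ • Rset 𝒱 c' := rfl
      rw [this, Measure.addHaar_smul, hvol1, finrank_euclideanSpace_fin]
      congr 1
      rw [abs_of_nonneg (by positivity), ENNReal.ofReal_pow (by positivity),
        ENNReal.ofReal_inv_of_pos hε]
    refine ⟨w, c', hsum', himg1, c'', ?_, himg2, hvol2⟩
    simp only [hc'', ← Finset.mul_sum, hsum', inv_mul_cancel₀ hε.ne']
  refine ⟨key, ?_⟩
  rintro ⟨c₀, hc₀, hvol₀⟩
  set V := volume (Rset 𝒱 c₀) with hV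
  rcases eq_or_ne V ⊤ with hVtop | hVtop
  · refine top_le_iff.mp ?_
    calc (⊤ : ℝ≥0∞) = V := hVtop.symm
      _ ≤ _ := le_iSup₂ (f := fun c (_ : c ∈ {c : EuclideanSpace ℝ (Fin d) → ℝ |
          ∑ v ∈ 𝒱, c v = 1}) => volume (Rset 𝒱 c)) c₀ hc₀
  · rw [iSup₂_eq_top]
    intro M hM
    have htop : ⨆ n : ℕ, (n : ℝ≥0∞) * V = ⊤ := by
      rw [← ENNReal.iSup_mul, ENNReal.iSup_natCast, ENNReal.top_mul hvol₀.ne']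
    obtain ⟨n, hn⟩ : ∃ n : ℕ, M < (n : ℝ≥0∞) * V := by
      rw [← lt_iSup_iff, htop]; exact hM
    set ε : ℝ := ((n : ℝ) + 2)⁻¹ with hε
    have hε0 : 0 < ε := by positivity
    have hε1 : ε < 1 := by
      rw [hε, inv_lt_one_iff₀]
      right; linarith
    obtain ⟨w, c', _, _, c'', hsum'', _, hvol''⟩ := key c₀ hc₀ hvol₀ ε hε0 hε1
    refine ⟨c'', hsum'', ?_⟩
    rw [hvol'']
    refine hn.trans_le ?_
    rw [← hV]
    refine mul_le_mul_left ?_ V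
    have h1 : (ENNReal.ofReal ε)⁻¹ = ENNReal.ofReal ((n : ℝ) + 2) := by
      rw [hε, ENNReal.ofReal_inv_of_pos (by positivity), inv_inv]
    rw [h1]
    calc (n : ℝ≥0∞) = ENNReal.ofReal n := (ENNReal.ofReal_natCast n).symm
      _ ≤ ENNReal.ofReal ((n : ℝ) + 2) := ENNReal.ofReal_le_ofReal (by linarith)
      _ ≤ ENNReal.ofReal ((n : ℝ) + 2) ^ d := le_self_pow₀ (ENNReal.one_le_ofReal.mpr
          (by linarith)) hd
end
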